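/- Let D_0 be the operator on ℓ²(ℤ_{≥0}) defined by (D_0 φ)(l) = p^{l/e}(φ(l) - φ(l+1)). Then D_0 is injective, its inverse on its range is given by (D_0^{-1} k)(l) = ∑_{j ≥ l} p^{-j/e} k(j), and D_0^{-1} extends to a Hilbert–Schmidt (hence compact) operator on ℓ²(ℤ_{≥0}) with Hilbert–Schmidt norm 1/(1 - p^{-2/e}). -/

import Mathlib

open Filter Finset
open scoped ENNReal Topology

noncomputable section StmtSixAux

/-- ℓ²(ℕ, ℂ) -/
abbrev HS6 : Type := lp (fun _ : ℕ => ℂ) 2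

/-- coordinate evaluation as a continuous linear functional on ℓ² -/
noncomputable def ev6 (j : ℕ) : HS6 →L[ℂ] ℂ :=
  LinearMap.mkContinuous
    { toFun := fun k => (k : ℕ → ℂ) j
      map_add' := fun f g => by simp [lp.coeFn_add]
      map_smul' := fun c f => by simp [lp.coeFn_smul] } 1
    (fun k => by
      show ‖(k : ℕ → ℂ) j‖ ≤ 1 * ‖k‖
      simpa using lp.norm_apply_le_norm (by norm_num : (2 : ℝ≥0∞) ≠ 0) k j)

@[simp] lemma ev6_apply (j : ℕ) (k : HS6) : ev6 j k = (k : ℕ → ℂ) j := rfl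

/-- the truncated constant vector `(c, c, ..., c, 0, 0, ...)` with `j+1` entries -/
noncomputable def vv6 (c : ℂ) (j : ℕ) : HS6 :=
  ∑ i ∈ Finset.range (j + 1), lp.single 2 i c

lemma vv6_apply (c : ℂ) (j l : ℕ) :
    (vv6 c j : ℕ → ℂ) l = if l ≤ j then c else 0 := by
  rw [vv6, lp.coeFn_sum, Finset.sum_apply]
  by_cases h : l ≤ j
  · rw [if_pos h, Finset.sum_eq_single l]
    · exact lp.single_apply_self (E := fun _ : ℕ => ℂ) 2 l c
    · intro i _ hil
      exact lp.single_apply_ne (E := fun _ : ℕ => ℂ) 2 i c (Ne.symm hil)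
    · intro hl
      exact absurd (Finset.mem_range.2 (Nat.lt_succ_of_le h)) hl
  · rw [if_neg h]
    refine Finset.sum_eq_zero fun i hi => ?_
    refine lp.single_apply_ne (E := fun _ : ℕ => ℂ) 2 i c ?_
    have := Finset.mem_range.1 hi
    omega

lemma vv6_norm_le (c : ℂ) (j : ℕ) : ‖vv6 c j‖ ≤ (j + 1 : ℝ) * ‖c‖ := by
  refine le_trans (norm_sum_le _ _) ?_
  have : ∀ i ∈ Finset.range (j + 1), ‖lp.single (E := fun _ : ℕ => ℂ) 2 i c‖ = ‖c‖ := by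
    intro i _
    exact lp.norm_single (E := fun _ : ℕ => ℂ) (p := 2) (by norm_num) i c
  rw [Finset.sum_congr rfl this, Finset.sum_const, Finset.card_range, nsmul_eq_mul]
  push_cast
  exact le_rfl

/-- rank-one operators are compact -/
lemma isCompactOperator_smulRight6 (f : HS6 →L[ℂ] ℂ) (v : HS6) :
    IsCompactOperator (f.smulRight v) := by
  refine ⟨(fun z : ℂ => z • v) '' Metric.closedBall 0 (‖f‖ + 1),
    ((isCompact_closedBall 0 (‖f‖ + 1)).image (by continuity)), ?_⟩
  refine Filter.mem_of_superset (Metric.closedBall_mem_nhds 0 one_pos) ?_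
  intro k hk
  refine ⟨f k, ?_, rfl⟩
  rw [Metric.mem_closedBall, dist_zero_right] at hk ⊢
  calc ‖f k‖ ≤ ‖f‖ * ‖k‖ := f.le_opNorm k
    _ ≤ ‖f‖ * 1 := by
        exact mul_le_mul_of_nonneg_left hk (norm_nonneg f)
    _ ≤ ‖f‖ + 1 := by linarith [norm_nonneg f]

end StmtSixAux

/-- The forward difference operator `(D₀ φ)(l) = p^(l/e) (φ l - φ (l+1))` on `ℓ²(ℕ)` is
injective, its inverse is given by the kernel `K l j = p^(-j/e)` for `j ≥ l` (and `0`
otherwise), and this inverse extends to a compact Hilbert–Schmidt operator on `ℓ²(ℕ)`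
with Hilbert–Schmidt norm `1/(1 - p^(-2/e))`. -/
theorem stmt_6 (p e : ℕ) (hp : 2 ≤ p) (he : 1 ≤ e)
    (D0 : (ℕ → ℂ) → (ℕ → ℂ))
    (hD0 : ∀ (φ : ℕ → ℂ) (l : ℕ),
      D0 φ l = ((p : ℂ) ^ (((l : ℂ)) / (e : ℂ))) * (φ l - φ (l + 1)))
    (K : ℕ → ℕ → ℝ)
    (hK : ∀ l j : ℕ, K l j = if l ≤ j then (p : ℝ) ^ (-(j : ℝ) / (e : ℝ)) else 0) :
    (∀ φ : ℕ → ℂ, Memℓp φ 2 → D0 φ = 0 → φ = 0) ∧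
    (∀ φ k : ℕ → ℂ, Memℓp φ 2 → Memℓp k 2 → D0 φ = k →
      ∀ l : ℕ, φ l = ∑' j : ℕ, (K l j : ℂ) * k j) ∧
    (∃ T : lp (fun _ : ℕ => ℂ) 2 →L[ℂ] lp (fun _ : ℕ => ℂ) 2,
      (∀ (k : lp (fun _ : ℕ => ℂ) 2) (l : ℕ),
        (T k : ℕ → ℂ) l = ∑' j : ℕ, (K l j : ℂ) * (k : ℕ → ℂ) j) ∧
      IsCompactOperator T ∧
      Real.sqrt (∑' (l : ℕ) (j : ℕ), (K l j) ^ 2) =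
        1 / (1 - (p : ℝ) ^ (-(2 : ℝ) / (e : ℝ)))) := by
  -- basic positivity facts
  have hp1 : (1 : ℝ) < (p : ℝ) := by exact_mod_cast lt_of_lt_of_le one_lt_two (by exact_mod_cast hp)
  have hp0 : (0 : ℝ) < (p : ℝ) := lt_trans one_pos hp1
  have he0 : (0 : ℝ) < (e : ℝ) := by exact_mod_cast he
  set ρ : ℝ := (p : ℝ) ^ (-(1 : ℝ) / (e : ℝ)) with hρdef
  have hρ0 : 0 < ρ := Real.rpow_pos_of_pos hp0 _
  have hρ1 : ρ < 1 :=
    Real.rpow_lt_one_of_one_lt_of_neg hp1 (div_neg_of_neg_of_pos (by norm_num) he0)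
  have hKρ : ∀ j : ℕ, (p : ℝ) ^ (-(j : ℝ) / (e : ℝ)) = ρ ^ j := by
    intro j
    rw [hρdef, ← Real.rpow_natCast ((p : ℝ) ^ (-(1 : ℝ) / (e : ℝ))) j,
      ← Real.rpow_mul hp0.le]
    congr 1
    ring
  have hK' : ∀ l j : ℕ, K l j = if l ≤ j then ρ ^ j else 0 := by
    intro l j; rw [hK, hKρ]
  -- ℓ² functions tend to zero
  have htend0 : ∀ φ : ℕ → ℂ, Memℓp φ 2 → Tendsto φ atTop (𝓝 0) := by
    intro φ hφ
    have hs : Summable (fun i => ‖φ i‖ ^ (2 : ℝ≥0∞).toReal) :=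
      (memℓp_gen_iff (by norm_num)).1 hφ
    have h0 : Tendsto (fun i => ‖φ i‖ ^ (2 : ℝ≥0∞).toReal) atTop (𝓝 0) :=
      hs.tendsto_atTop_zero
    have h1 : Tendsto (fun i => Real.sqrt (‖φ i‖ ^ (2 : ℝ≥0∞).toReal)) atTop
        (𝓝 (Real.sqrt 0)) := (Real.continuous_sqrt.tendsto 0).comp h0
    rw [Real.sqrt_zero] at h1
    have heq : (fun i => Real.sqrt (‖φ i‖ ^ (2 : ℝ≥0∞).toReal)) = fun i => ‖φ i‖ := by
      funext i
      rw [show (2 : ℝ≥0∞).toReal = ((2 : ℕ) : ℝ) by norm_num, Real.rpow_natCast,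
        Real.sqrt_sq (norm_nonneg _)]
    rw [heq] at h1
    exact tendsto_zero_iff_norm_tendsto_zero.2 h1
  -- Part 1
  have part1 : ∀ φ : ℕ → ℂ, Memℓp φ 2 → D0 φ = 0 → φ = 0 := by
    intro φ hφ h0
    have hstep : ∀ l, φ l = φ (l + 1) := by
      intro l
      have h := congrFun h0 l
      rw [hD0] at h
      have hb : ((p : ℂ) ^ (((l : ℂ)) / (e : ℂ))) ≠ 0 := by
        intro hzero
        rw [Complex.cpow_eq_zero_iff] at hzero
        exact (Nat.cast_ne_zero.2 (by omega) : (p : ℂ) ≠ 0) hzero.1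
      rcases mul_eq_zero.1 h with h' | h'
      · exact absurd h' hb
      · exact sub_eq_zero.1 h'
    have hconst : ∀ l, φ l = φ 0 := by
      intro l
      induction l with
      | zero => rfl
      | succ n ih => rw [← hstep n, ih]
    have h00 : Tendsto φ atTop (𝓝 (φ 0)) := by
      rw [show φ = fun _ => φ 0 from funext hconst]
      exact tendsto_const_nhds
    have hφ0 : φ 0 = 0 := tendsto_nhds_unique h00 (htend0 φ hφ)
    funext l
    rw [hconst l, hφ0]
    rfl
  -- complex power facts
  have hcpow : ∀ j : ℕ, (p : ℂ) ^ (((j : ℂ)) / (e : ℂ)) =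
      (((p : ℝ) ^ ((j : ℝ) / (e : ℝ)) : ℝ) : ℂ) := by
    intro j
    have hcast : ((j : ℂ)) / (e : ℂ) = ((((j : ℝ)) / (e : ℝ) : ℝ) : ℂ) := by
      push_cast; ring
    rw [hcast, show ((p : ℕ) : ℂ) = (((p : ℝ)) : ℂ) by push_cast; ring]
    exact (Complex.ofReal_cpow hp0.le _).symm
  have hinv : ∀ j : ℕ, ((ρ ^ j : ℝ) : ℂ) * (p : ℂ) ^ (((j : ℂ)) / (e : ℂ)) = 1 := by
    intro j
    rw [hcpow j, ← Complex.ofReal_mul, ← hKρ j, ← Real.rpow_add hp0]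
    rw [show -(j : ℝ) / (e : ℝ) + (j : ℝ) / (e : ℝ) = 0 by ring, Real.rpow_zero,
      Complex.ofReal_one]
  -- Part 2
  have part2 : ∀ φ k : ℕ → ℂ, Memℓp φ 2 → Memℓp k 2 → D0 φ = k →
      ∀ l : ℕ, φ l = ∑' j : ℕ, (K l j : ℂ) * k j := by
    intro φ k hφ hk hDk l
    have hterm : ∀ j, l ≤ j → (K l j : ℂ) * k j = φ j - φ (j + 1) := by
      intro j hj
      rw [← hDk, hD0, hK' l j, if_pos hj, ← mul_assoc, hinv j, one_mul]
    obtain ⟨C, hC⟩ : ∃ C : ℝ, ∀ j, ‖k j‖ ≤ C := by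
      have hinfty : Memℓp k ∞ := hk.of_exponent_ge le_top
      obtain ⟨C, hC⟩ := memℓp_infty_iff.1 hinfty
      exact ⟨C, fun j => hC ⟨j, rfl⟩⟩
    have hC0 : 0 ≤ C := le_trans (norm_nonneg _) (hC 0)
    have hsum : Summable (fun j => (K l j : ℂ) * k j) := by
      apply Summable.of_norm_bounded (g := fun j => C * ρ ^ j)
        ((summable_geometric_of_lt_one hρ0.le hρ1).mul_left C)
      intro j
      rw [norm_mul, Complex.norm_real, Real.norm_eq_abs, hK' l j]
      by_cases hj : l ≤ j
      · rw [if_pos hj, abs_of_nonneg (pow_nonneg hρ0.le j)]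
        calc ρ ^ j * ‖k j‖ ≤ ρ ^ j * C :=
              mul_le_mul_of_nonneg_left (hC j) (pow_nonneg hρ0.le j)
          _ = C * ρ ^ j := mul_comm _ _
      · rw [if_neg hj, abs_zero, zero_mul]
        positivity
    have hpartial : ∀ N, l ≤ N →
        ∑ j ∈ Finset.range N, (K l j : ℂ) * k j = φ l - φ N := by
      intro N hN
      induction N, hN using Nat.le_induction with
      | base =>
        have hz : ∀ j ∈ Finset.range l, (K l j : ℂ) * k j = 0 := by
          intro j hj
          have hjl := Finset.mem_range.1 hj
          rw [hK' l j, if_neg (by omega), Complex.ofReal_zero, zero_mul]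
        rw [Finset.sum_eq_zero hz, sub_self]
      | succ N hN ih =>
        rw [Finset.sum_range_succ, ih, hterm N hN]
        ring
    have h1 : Tendsto (fun N => ∑ j ∈ Finset.range N, (K l j : ℂ) * k j) atTop
        (𝓝 (∑' j, (K l j : ℂ) * k j)) := hsum.hasSum.tendsto_sum_nat
    have h2 : Tendsto (fun N => φ l - φ N) atTop (𝓝 (φ l)) := by
      simpa using tendsto_const_nhds.sub (htend0 φ hφ)
    have heq : (fun N => ∑ j ∈ Finset.range N, (K l j : ℂ) * k j) =ᶠ[atTop]
        (fun N => φ l - φ N) := Filter.eventually_atTop.2 ⟨l, hpartial⟩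
    exact (tendsto_nhds_unique (h1.congr' heq) h2).symm
  refine ⟨part1, part2, ?_⟩
  -- Part 3 : the compact operator
  set c : ℕ → ℂ := fun j => ((ρ ^ j : ℝ) : ℂ) with hc
  set Tj : ℕ → (HS6 →L[ℂ] HS6) := fun j => (ev6 j).smulRight (vv6 (c j) j) with hTjdef
  have hcnorm : ∀ j, ‖c j‖ = ρ ^ j := by
    intro j
    rw [hc, Complex.norm_real, Real.norm_eq_abs, abs_of_nonneg (pow_nonneg hρ0.le j)]
  have hTjnorm : ∀ j, ‖Tj j‖ ≤ ((j : ℝ) + 1) * ρ ^ j := by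
    intro j
    calc ‖Tj j‖ = ‖ev6 j‖ * ‖vv6 (c j) j‖ :=
          ContinuousLinearMap.norm_smulRight_apply _ _
      _ ≤ 1 * (((j : ℝ) + 1) * ‖c j‖) := by
          apply mul_le_mul (LinearMap.mkContinuous_norm_le _ zero_le_one _)
            (vv6_norm_le _ _) (norm_nonneg _) zero_le_one
      _ = ((j : ℝ) + 1) * ρ ^ j := by rw [one_mul, hcnorm j]
  have hTsummable : Summable Tj := by
    have hg : Summable (fun j : ℕ => ((j : ℝ) + 1) * ρ ^ j) := by
      have h1 := summable_pow_mul_geometric_of_norm_lt_one 1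
        (show ‖ρ‖ < 1 by rwa [Real.norm_eq_abs, abs_of_nonneg hρ0.le])
      have h2 := summable_geometric_of_lt_one hρ0.le hρ1
      exact (h1.add h2).congr fun n => by ring
    exact Summable.of_norm_bounded hg hTjnorm
  set T : HS6 →L[ℂ] HS6 := ∑' j, Tj j with hTdef
  have hhs : HasSum Tj T := hTsummable.hasSum
  have hTjc : ∀ s : Finset ℕ, IsCompactOperator ⇑(∑ j ∈ s, Tj j) := by
    intro s
    induction s using Finset.cons_induction with
    | empty => simpa using isCompactOperator_zero
    | cons a s ha ih =>
      rw [Finset.sum_cons]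
      exact (isCompactOperator_smulRight6 _ _).add ih
  have hTcompact : IsCompactOperator T :=
    isCompactOperator_of_tendsto hhs.tendsto_sum_nat
      (Filter.Eventually.of_forall fun N => hTjc (Finset.range N))
  have hform : ∀ (k : HS6) (l : ℕ),
      (T k : ℕ → ℂ) l = ∑' j : ℕ, (K l j : ℂ) * (k : ℕ → ℂ) j := by
    intro k l
    have h1 : HasSum (fun j => Tj j k) (T k) :=
      hhs.mapL ((ContinuousLinearMap.apply ℂ HS6) k)
    have h2 : HasSum (fun j => ev6 l (Tj j k)) (ev6 l (T k)) := h1.mapL (ev6 l)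
    have h3 : (fun j => ev6 l (Tj j k)) =
        fun j => (K l j : ℂ) * (k : ℕ → ℂ) j := by
      funext j
      have hTjk : Tj j k = ((k : ℕ → ℂ) j) • vv6 (c j) j := rfl
      show ((Tj j k : HS6) : ℕ → ℂ) l = _
      rw [hTjk, lp.coeFn_smul, Pi.smul_apply, vv6_apply, hK' l j]
      by_cases hj : l ≤ j
      · rw [if_pos hj, if_pos hj]
        simp only [hc, smul_eq_mul]
        ring
      · rw [if_neg hj, if_neg hj]
        simp
    rw [h3] at h2
    exact h2.tsum_eq.symm
  refine ⟨T, hform, hTcompact, ?_⟩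
  -- the Hilbert–Schmidt norm computation
  have hρ2 : ρ ^ 2 = (p : ℝ) ^ (-(2 : ℝ) / (e : ℝ)) := by
    rw [hρdef, ← Real.rpow_natCast ((p : ℝ) ^ (-(1 : ℝ) / (e : ℝ))) 2,
      ← Real.rpow_mul hp0.le]
    congr 1
    push_cast
    ring
  have hx0 : 0 ≤ ρ ^ 2 := pow_nonneg hρ0.le 2
  have hx1 : ρ ^ 2 < 1 := pow_lt_one₀ hρ0.le hρ1 (by norm_num)
  have hrow : ∀ l : ℕ, HasSum (fun j => (K l j) ^ 2) ((ρ ^ 2) ^ l / (1 - ρ ^ 2)) := by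
    intro l
    have hgeom : HasSum (fun j : ℕ => (ρ ^ 2) ^ (j + l)) ((ρ ^ 2) ^ l / (1 - ρ ^ 2)) := by
      simpa [pow_add, mul_comm, div_eq_mul_inv] using
        (hasSum_geometric_of_lt_one hx0 hx1).mul_left ((ρ ^ 2) ^ l)
    have hzero : ∑ i ∈ Finset.range l, (K l i) ^ 2 = 0 :=
      Finset.sum_eq_zero fun i hi => by
        rw [hK' l i, if_neg (by have := Finset.mem_range.1 hi; omega)]
        ring
    refine (hasSum_nat_add_iff' l).1 ?_
    rw [hzero, sub_zero]
    have hfe : (fun n => (K l (n + l)) ^ 2) = fun n => (ρ ^ 2) ^ (n + l) := by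
      funext n
      rw [hK' l (n + l), if_pos (Nat.le_add_left l n), ← pow_mul, ← pow_mul, mul_comm]
    rw [hfe]
    exact hgeom
  have htot : (∑' (l : ℕ) (j : ℕ), (K l j) ^ 2) =
      (1 - ρ ^ 2)⁻¹ * (1 - ρ ^ 2)⁻¹ := by
    have h1 : ∀ l : ℕ, ∑' j, (K l j) ^ 2 = (ρ ^ 2) ^ l / (1 - ρ ^ 2) :=
      fun l => (hrow l).tsum_eq
    have h2 : HasSum (fun l : ℕ => (ρ ^ 2) ^ l / (1 - ρ ^ 2))
        ((1 - ρ ^ 2)⁻¹ * (1 - ρ ^ 2)⁻¹) := by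
      simpa [div_eq_mul_inv] using
        (hasSum_geometric_of_lt_one hx0 hx1).mul_right ((1 - ρ ^ 2)⁻¹)
    rw [tsum_congr h1]
    exact h2.tsum_eq
  have h1ρ2 : (0 : ℝ) < 1 - ρ ^ 2 := by linarith
  rw [htot, ← hρ2, Real.sqrt_mul_self (inv_nonneg.2 h1ρ2.le), one_div]
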